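/- arXiv:1701.06866 — 4 statements merged into one kernel-verified Lean document; each statement's English description precedes it below -/
import Mathlib

section
/- Let x, p ∈ ℝ³ with x ≠ 0 satisfy G(x,p) = −1/2. Then, with ℓ = x × p and a = p × ℓ − x/|x|, one has ‖ℓ‖² + ‖a‖² = 1; in particular ‖ℓ‖ ≤ 1, and the third component ℓ₃ = x₁p₂ − x₂p₁ of the angular momentum satisfies |ℓ₃| ≤ 1. -/
/-- Euclidean dot product on `Fin 3 → ℝ`. -/
noncomputable def dot3 (x p : Fin 3 → ℝ) : ℝ := x 0 * p 0 + x 1 * p 1 + x 2 * p 2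

/-- Cross product on `Fin 3 → ℝ`. -/
noncomputable def cross3 (x p : Fin 3 → ℝ) : Fin 3 → ℝ :=
  ![x 1 * p 2 - x 2 * p 1, x 2 * p 0 - x 0 * p 2, x 0 * p 1 - x 1 * p 0]

/-- Euclidean norm on `Fin 3 → ℝ`. -/
noncomputable def norm3 (x : Fin 3 → ℝ) : ℝ := Real.sqrt (dot3 x x)

/-- The Kepler Hamiltonian `G(x,p) = |p|²/2 − 1/|x|`. -/
noncomputable def keplerG (x p : Fin 3 → ℝ) : ℝ := norm3 p ^ 2 / 2 - 1 / norm3 x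

lemma dot3_nonneg (x : Fin 3 → ℝ) : 0 ≤ dot3 x x := by
  unfold dot3; nlinarith [sq_nonneg (x 0), sq_nonneg (x 1), sq_nonneg (x 2)]

lemma norm3_sq (x : Fin 3 → ℝ) : norm3 x ^ 2 = dot3 x x := by
  unfold norm3; exact Real.sq_sqrt (dot3_nonneg x)

set_option maxHeartbeats 1000000 in
/-- on the energy surface `Σ(−1/2)`, with `ℓ = x × p` and
`a = p × ℓ − x/|x|`, one has `‖ℓ‖² + ‖a‖² = 1`, `‖ℓ‖ ≤ 1`, and `|ℓ₃| ≤ 1`. -/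
theorem stmt1 (x p : Fin 3 → ℝ) (hx : x ≠ 0) (hG : keplerG x p = -(1/2)) :
    norm3 (cross3 x p) ^ 2 + norm3 (cross3 p (cross3 x p) - (norm3 x)⁻¹ • x) ^ 2 = 1 ∧
    norm3 (cross3 x p) ≤ 1 ∧
    |x 0 * p 1 - x 1 * p 0| ≤ 1 := by
  set r := norm3 x with hr
  have hX : r ^ 2 = dot3 x x := norm3_sq x
  have hrpos : 0 < r := by
    have h0 : dot3 x x ≠ 0 := by
      intro h
      apply hx
      have h0 : x 0 = 0 ∧ x 1 = 0 ∧ x 2 = 0 := by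
        unfold dot3 at h
        constructor
        · nlinarith [sq_nonneg (x 0), sq_nonneg (x 1), sq_nonneg (x 2)]
        constructor
        · nlinarith [sq_nonneg (x 0), sq_nonneg (x 1), sq_nonneg (x 2)]
        · nlinarith [sq_nonneg (x 0), sq_nonneg (x 1), sq_nonneg (x 2)]
      funext i
      fin_cases i <;> simp [h0.1, h0.2.1, h0.2.2]
    have : 0 ≤ r := Real.sqrt_nonneg _
    rcases this.lt_or_eq with h | h
    · exact h
    · exfalso; apply h0; rw [← hX, ← h]; ring
  set s := r⁻¹ with hs
  have hrs : r * s = 1 := mul_inv_cancel₀ hrpos.ne'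
  have hs2 : s ^ 2 * dot3 x x = 1 := by
    rw [← hX]; field_simp [hs]; rw [← mul_pow, mul_comm, hrs, one_pow]
  have hP : 2 * s = norm3 p ^ 2 + 1 := by
    unfold keplerG at hG
    have h1 : 1 / r = s := by rw [hs, one_div]
    rw [h1] at hG
    linarith
  have hP' : 2 * s = dot3 p p + 1 := by rw [hP, norm3_sq]
  simp only [dot3] at hP' hs2
  have hmain : norm3 (cross3 x p) ^ 2 + norm3 (cross3 p (cross3 x p) - (norm3 x)⁻¹ • x) ^ 2 = 1 := by
    rw [norm3_sq, norm3_sq, ← hr, ← hs]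
    simp only [dot3, cross3, Pi.sub_apply, Pi.smul_apply, smul_eq_mul,
      Matrix.cons_val_zero, Matrix.cons_val_one, Matrix.head_cons,
      Matrix.cons_val_two, Matrix.tail_cons]
    linear_combination (-((x 1 * p 2 - x 2 * p 1) ^ 2 + (x 2 * p 0 - x 0 * p 2) ^ 2
      + (x 0 * p 1 - x 1 * p 0) ^ 2)) * hP' + hs2
  have h1 : norm3 (cross3 x p) ^ 2 ≤ 1 := by
    nlinarith [sq_nonneg (norm3 (cross3 p (cross3 x p) - (norm3 x)⁻¹ • x))]
  refine ⟨hmain, ?_, ?_⟩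
  · have h2 : 0 ≤ norm3 (cross3 x p) := Real.sqrt_nonneg _
    nlinarith [sq_nonneg (norm3 (cross3 x p) - 1)]
  · rw [norm3_sq] at h1
    simp only [dot3, cross3, Matrix.cons_val_zero, Matrix.cons_val_one, Matrix.head_cons,
      Matrix.cons_val_two, Matrix.tail_cons] at h1
    have ha := sq_nonneg (x 1 * p 2 - x 2 * p 1)
    have hb := sq_nonneg (x 2 * p 0 - x 0 * p 2)
    have hL3 : (x 0 * p 1 - x 1 * p 0) ^ 2 ≤ 1 := by
      ring_nf at h1 ha hb ⊢
      linarith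
    rw [abs_le]
    constructor <;> nlinarith [sq_nonneg (x 0 * p 1 - x 1 * p 0 + 1),
      sq_nonneg (x 0 * p 1 - x 1 * p 0 - 1)]
end

section
/- Fix an integer n ≥ 1 and N ∈ ℕ. For any two elements α, α′ of 𝒜ₙ = {α ∈ ℂ^{n+1} : |Re α| = |Im α| = 1 and Re α · Im α = 0}, one has ∫_{𝕊ⁿ} |α·ω|^{2N} dΩ(ω) = ∫_{𝕊ⁿ} |α′·ω|^{2N} dΩ(ω); that is, the normalization integral of the coherent states Φ_{α,N}(ω) = a(N)(α·ω)^N is independent of α ∈ 𝒜ₙ. -/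
open MeasureTheory
open Metric Set Function
open scoped Pointwise

set_option linter.unusedSectionVars false

/-- The bilinear pairing `α·ω = Σ αⱼ ωⱼ` (no conjugation) of `α ∈ ℂ^{n+1}` with
`ω ∈ ℝ^{n+1}`. -/
noncomputable def cdot {n : ℕ} (α : Fin (n + 1) → ℂ) (ω : EuclideanSpace ℝ (Fin (n + 1))) : ℂ :=
  ∑ j, α j * (ω j : ℂ)

/-- Membership in `𝒜ₙ = {α ∈ ℂ^{n+1} : |Re α| = |Im α| = 1, Re α · Im α = 0}`. -/
def memA {n : ℕ} (α : Fin (n + 1) → ℂ) : Prop :=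
  (∑ j, (α j).re ^ 2) = 1 ∧ (∑ j, (α j).im ^ 2) = 1 ∧ (∑ j, (α j).re * (α j).im) = 0


variable {E : Type*} [NormedAddCommGroup E] [InnerProductSpace ℝ E] [FiniteDimensional ℝ E]
  [MeasurableSpace E] [BorelSpace E]

lemma smul_image_eq (s : Set (sphere (0:E) 1)) (r : Ioi (0:ℝ)) :
    (Subtype.val '' ((homeomorphUnitSphereProd E) ⁻¹'
        (s ×ˢ Iio r)) : Set E)
      = Ioo (0:ℝ) ↑r • (Subtype.val '' s) := by
  rw [← image2_smul, image2_image_right, ← Homeomorph.image_symm, image_image,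
    ← image_subtype_val_Ioi_Iio, image2_image_left, image2_swap, ← image_prod]
  rfl

lemma meas_smul {s : Set (sphere (0:E) 1)} (hs : MeasurableSet s) :
    MeasurableSet (Ioo (0:ℝ) 1 • (Subtype.val '' s) : Set E) := by
  have : Ioo (0:ℝ) 1 = Ioo (0:ℝ) ((⟨1, mem_Ioi.2 one_pos⟩ : Ioi (0:ℝ)) : ℝ) := rfl
  rw [this, ← smul_image_eq]
  exact (MeasurableEmbedding.subtype_coe (measurableSet_singleton (0:E)).compl).measurableSet_image.2
    ((homeomorphUnitSphereProd E).measurable (hs.prod measurableSet_Iio))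

/-- The restriction of a linear isometry equivalence to the unit sphere. -/
noncomputable def sphereMap (e : E ≃ₗᵢ[ℝ] E) (x : sphere (0:E) 1) : sphere (0:E) 1 :=
  ⟨e x, by
    rw [mem_sphere_zero_iff_norm, e.norm_map]
    exact mem_sphere_zero_iff_norm.1 x.2⟩

lemma continuous_sphereMap (e : E ≃ₗᵢ[ℝ] E) : Continuous (sphereMap e) :=
  Continuous.subtype_mk (e.continuous.comp continuous_subtype_val) _

lemma measurePreserving_sphereMap (e : E ≃ₗᵢ[ℝ] E) :
    MeasurePreserving (sphereMap e)
      (volume : Measure E).toSphere (volume : Measure E).toSphere := by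
  refine ⟨(continuous_sphereMap e).measurable, ?_⟩
  ext s hs
  rw [Measure.map_apply (continuous_sphereMap e).measurable hs,
    Measure.toSphere_apply' _ ((continuous_sphereMap e).measurable hs),
    Measure.toSphere_apply' _ hs]
  congr 1
  have h1 : (Subtype.val '' (sphereMap e ⁻¹' s) : Set E) = e ⁻¹' (Subtype.val '' s) := by
    ext x
    constructor
    · rintro ⟨y, hy, rfl⟩
      exact ⟨sphereMap e y, hy, rfl⟩
    · rintro ⟨z, hz, hzx⟩
      have hx : x ∈ sphere (0:E) 1 := by
        rw [mem_sphere_zero_iff_norm, ← e.norm_map, ← hzx]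
        exact mem_sphere_zero_iff_norm.1 z.2
      refine ⟨⟨x, hx⟩, ?_, rfl⟩
      show (⟨e x, _⟩ : sphere (0:E) 1) ∈ s
      have : (⟨e x, by rw [mem_sphere_zero_iff_norm, e.norm_map]; exact mem_sphere_zero_iff_norm.1 hx⟩ : sphere (0:E) 1) = z := Subtype.ext hzx.symm
      simpa [sphereMap, this] using hz
  have h2 : Ioo (0:ℝ) 1 • (e ⁻¹' (Subtype.val '' s)) = e ⁻¹' (Ioo (0:ℝ) 1 • (Subtype.val '' s)) := by
    ext x
    constructor
    · rintro ⟨r, hr, y, hy, rfl⟩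
      exact ⟨r, hr, e y, hy, (e.map_smul r y).symm⟩
    · rintro ⟨r, hr, z, hz, hzx⟩
      refine ⟨r, hr, e.symm z, by simpa using hz, ?_⟩
      apply e.injective
      rw [e.map_smul]
      simpa using hzx
  rw [h1, h2]
  exact e.measurePreserving.measure_preimage (meas_smul hs).nullMeasurableSet

lemma cdot_eq_inner {n : ℕ} (α : Fin (n + 1) → ℂ) (a b x : EuclideanSpace ℝ (Fin (n + 1)))
    (ha : ∀ j, a j = (α j).re) (hb : ∀ j, b j = (α j).im) :
    cdot α x = ((inner ℝ a x : ℝ) : ℂ) + ((inner ℝ b x : ℝ) : ℂ) * Complex.I := by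
  simp only [cdot, PiLp.inner_apply, RCLike.inner_apply, conj_trivial, ha, hb]
  push_cast
  rw [Finset.sum_mul, ← Finset.sum_add_distrib]
  refine Finset.sum_congr rfl fun j _ => ?_
  rw [← Complex.re_add_im (α j)]
  simp only [Complex.add_re, Complex.add_im, Complex.ofReal_re, Complex.ofReal_im,
    Complex.mul_I_re, Complex.mul_I_im, Complex.ofReal_mul]
  ring_nf

lemma continuous_cdot {n : ℕ} (α : Fin (n + 1) → ℂ) : Continuous (cdot α) := by
  unfold cdot
  exact continuous_finset_sum _ fun j _ =>
    continuous_const.mul (Complex.continuous_ofReal.comp ((continuous_apply j).comp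
      (PiLp.continuous_ofLp 2 _)))

/-- For `α ∈ 𝒜ₙ` we get an orthonormal basis whose first two vectors are `Re α`, `Im α`. -/
lemma exists_onb {n : ℕ} (hn : 1 ≤ n) (α : Fin (n + 1) → ℂ) (hα : memA α) :
    ∃ B : OrthonormalBasis (Fin (n + 1)) ℝ (EuclideanSpace ℝ (Fin (n + 1))),
      (∀ j, B 0 j = (α j).re) ∧ (∀ j, B 1 j = (α j).im) := by
  have h01 : (0 : Fin (n + 1)) ≠ 1 := by
    intro h
    have h2 : (0 : ℕ) = (1 : Fin (n+1)).val := congrArg Fin.val h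
    rw [Fin.val_one'] at h2
    rw [Nat.mod_eq_of_lt (by omega)] at h2
    omega
  set a : EuclideanSpace ℝ (Fin (n + 1)) := WithLp.toLp 2 (fun j => (α j).re) with ha
  set b : EuclideanSpace ℝ (Fin (n + 1)) := WithLp.toLp 2 (fun j => (α j).im) with hb
  set v : Fin (n + 1) → EuclideanSpace ℝ (Fin (n + 1)) :=
    fun i => if i = 0 then a else b with hv
  have hinner : ∀ x y : EuclideanSpace ℝ (Fin (n + 1)),
      (inner ℝ x y : ℝ) = ∑ j, x j * y j := fun x y => by
    simp [PiLp.inner_apply, RCLike.inner_apply, mul_comm]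
  have haa : (inner ℝ a a : ℝ) = 1 := by
    rw [hinner]; simpa [sq] using hα.1
  have hbb : (inner ℝ b b : ℝ) = 1 := by
    rw [hinner]; simpa [sq] using hα.2.1
  have hab : (inner ℝ a b : ℝ) = 0 := by
    rw [hinner]; exact hα.2.2
  have hv_on : Orthonormal ℝ (Set.restrict ({0, 1} : Set (Fin (n + 1))) v) := by
    rw [orthonormal_iff_ite]
    rintro ⟨i, hi⟩ ⟨j, hj⟩
    simp only [Set.mem_insert_iff, Set.mem_singleton_iff] at hi hj
    have comm : (inner ℝ b a : ℝ) = 0 := by rw [real_inner_comm]; exact hab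
    rcases hi with rfl | rfl <;> rcases hj with rfl | rfl <;>
      simp [v, Set.restrict, h01, h01.symm, Subtype.ext_iff, haa, hbb, hab, comm,
        (by rw [norm_eq_sqrt_real_inner, haa, Real.sqrt_one] : ‖a‖ = 1),
        (by rw [norm_eq_sqrt_real_inner, hbb, Real.sqrt_one] : ‖b‖ = 1)]
  have hcard : Module.finrank ℝ (EuclideanSpace ℝ (Fin (n + 1))) = Fintype.card (Fin (n + 1)) := by
    simp
  obtain ⟨B, hB⟩ := Orthonormal.exists_orthonormalBasis_extension_of_card_eq hcard hv_on
  refine ⟨B, fun j => ?_, fun j => ?_⟩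
  · rw [hB 0 (by simp)]; simp [v, a]
  · rw [hB 1 (by simp)]; simp [v, b, h01.symm]

/-- for `α, α′ ∈ 𝒜ₙ`, the normalization integrals
`∫_{𝕊ⁿ} |α·ω|^{2N} dΩ` coincide. -/
theorem stmt8 (n : ℕ) (hn : 1 ≤ n) (N : ℕ) (α α' : Fin (n + 1) → ℂ)
    (hα : memA α) (hα' : memA α') :
    ∫ ω : Metric.sphere (0 : EuclideanSpace ℝ (Fin (n + 1))) 1,
        ‖cdot α (ω : EuclideanSpace ℝ (Fin (n + 1)))‖ ^ (2 * N)
        ∂((volume : Measure (EuclideanSpace ℝ (Fin (n + 1)))).toSphere) =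
      ∫ ω : Metric.sphere (0 : EuclideanSpace ℝ (Fin (n + 1))) 1,
        ‖cdot α' (ω : EuclideanSpace ℝ (Fin (n + 1)))‖ ^ (2 * N)
        ∂((volume : Measure (EuclideanSpace ℝ (Fin (n + 1)))).toSphere) := by
  obtain ⟨B, hB0, hB1⟩ := exists_onb hn α hα
  obtain ⟨B', hB'0, hB'1⟩ := exists_onb hn α' hα'
  set e : EuclideanSpace ℝ (Fin (n + 1)) ≃ₗᵢ[ℝ] EuclideanSpace ℝ (Fin (n + 1)) :=
    B'.repr.trans B.repr.symm with he
  have he_basis : ∀ i, e (B' i) = B i := fun i => by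
    simp [he, B'.repr_self, B.repr_symm_single]
  have key : ∀ ω : EuclideanSpace ℝ (Fin (n + 1)), cdot α (e ω) = cdot α' ω := by
    intro ω
    rw [cdot_eq_inner α (B 0) (B 1) (e ω) hB0 hB1,
      cdot_eq_inner α' (B' 0) (B' 1) ω hB'0 hB'1,
      ← he_basis 0, ← he_basis 1, e.inner_map_map, e.inner_map_map]
  have hcont : Continuous fun ω : Metric.sphere (0 : EuclideanSpace ℝ (Fin (n + 1))) 1 =>
      ‖cdot α (ω : EuclideanSpace ℝ (Fin (n + 1)))‖ ^ (2 * N) :=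
    (continuous_norm.comp ((continuous_cdot α).comp continuous_subtype_val)).pow _
  calc ∫ ω : Metric.sphere (0 : EuclideanSpace ℝ (Fin (n + 1))) 1,
        ‖cdot α (ω : EuclideanSpace ℝ (Fin (n + 1)))‖ ^ (2 * N)
        ∂((volume : Measure (EuclideanSpace ℝ (Fin (n + 1)))).toSphere)
      = ∫ ω : Metric.sphere (0 : EuclideanSpace ℝ (Fin (n + 1))) 1,
        ‖cdot α ((sphereMap e ω : Metric.sphere (0 : EuclideanSpace ℝ (Fin (n + 1))) 1) : EuclideanSpace ℝ (Fin (n + 1)))‖ ^ (2 * N)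
        ∂((volume : Measure (EuclideanSpace ℝ (Fin (n + 1)))).toSphere) := by
        rw [← MeasureTheory.integral_map (measurePreserving_sphereMap e).measurable.aemeasurable
          hcont.aestronglyMeasurable, (measurePreserving_sphereMap e).map_eq]
    _ = _ := by
        refine integral_congr_ae (Filter.Eventually.of_forall fun ω => ?_)
        show ‖cdot α (e ω)‖ ^ (2 * N) = _
        rw [key]
end

section
/- Fix an integer n ≥ 1 and α ∈ 𝒜ₙ. There exists a constant C > 0 such that for every integer N ≥ 1, | (N/π)^{(n−1)/2} · ∫_{𝕊ⁿ} |α·ω|^{2N} dΩ(ω) − 2π | ≤ C/N. Equivalently, the normalization constant a(N) defined by a(N)^{−2} = ∫_{𝕊ⁿ} |α·ω|^{2N} dΩ(ω) satisfies a(N)² = (N/π)^{(n−1)/2} [1/(2π) + O(N^{−1})] as N → ∞. -/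
open MeasureTheory

open Real Set Metric

lemma gamma_interp_le {x t : ℝ} (hx : 0 < x) (ht0 : 0 ≤ t) (ht1 : t ≤ 1) :
    Real.Gamma (x + t) ≤ x ^ t * Real.Gamma x := by
  have h := Real.convexOn_log_Gamma.2 (Set.mem_Ioi.2 hx) (Set.mem_Ioi.2 (by linarith : (0:ℝ) < x + 1))
      (by linarith : (0:ℝ) ≤ 1 - t) ht0 (by ring)
  have hxt : (1 - t) • x + t • (x + 1) = x + t := by simp [smul_eq_mul]; ring
  rw [hxt] at h
  simp only [Function.comp_apply, smul_eq_mul] at h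
  have hG1 : Real.Gamma (x + 1) = x * Real.Gamma x := Real.Gamma_add_one hx.ne'
  have hGx : 0 < Real.Gamma x := Real.Gamma_pos_of_pos hx
  have hGxt : 0 < Real.Gamma (x + t) := Real.Gamma_pos_of_pos (by linarith)
  have h2 : Real.log (Real.Gamma (x + t)) ≤ Real.log (Real.Gamma x) + t * Real.log x := by
    rw [hG1, Real.log_mul hx.ne' hGx.ne'] at h
    nlinarith [h]
  calc Real.Gamma (x + t) = Real.exp (Real.log (Real.Gamma (x + t))) := (Real.exp_log hGxt).symm
    _ ≤ Real.exp (Real.log (Real.Gamma x) + t * Real.log x) := Real.exp_le_exp.2 h2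
    _ = x ^ t * Real.Gamma x := by
        rw [Real.exp_add, Real.exp_log hGx, Real.rpow_def_of_pos hx, mul_comm t, mul_comm]

lemma le_gamma_interp {x t : ℝ} (hx : 1 ≤ x) (ht0 : 0 ≤ t) (ht1 : t ≤ 1) :
    (x - 1) ^ t * Real.Gamma x ≤ Real.Gamma (x + t) := by
  have hx0 : (0:ℝ) < x := by linarith
  have h := Real.convexOn_log_Gamma.2 (Set.mem_Ioi.2 (by linarith : (0:ℝ) < x + t))
      (Set.mem_Ioi.2 (by linarith : (0:ℝ) < x + 1 + t)) ht0 (by linarith : (0:ℝ) ≤ 1 - t) (by ring)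
  have hxt : t • (x + t) + (1 - t) • (x + 1 + t) = x + 1 := by simp [smul_eq_mul]; ring
  rw [hxt] at h
  simp only [Function.comp_apply, smul_eq_mul] at h
  have hG1 : Real.Gamma (x + 1 + t) = (x + t) * Real.Gamma (x + t) := by
    rw [show x + 1 + t = (x + t) + 1 by ring]
    exact Real.Gamma_add_one (by positivity)
  have hGx : 0 < Real.Gamma x := Real.Gamma_pos_of_pos hx0
  have hGxt : 0 < Real.Gamma (x + t) := Real.Gamma_pos_of_pos (by linarith)
  -- log Γ(x+1) ≤ log Γ(x+t) + (1-t) log (x+t)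
  have h2 : Real.log (Real.Gamma (x + 1)) ≤
      Real.log (Real.Gamma (x + t)) + (1 - t) * Real.log (x + t) := by
    rw [hG1, Real.log_mul (by positivity) hGxt.ne'] at h
    nlinarith [h]
  -- Γ(x+t) ≥ Γ(x+1) / (x+t)^(1-t)
  have key : Real.Gamma (x + 1) ≤ (x + t) ^ (1 - t) * Real.Gamma (x + t) := by
    calc Real.Gamma (x + 1) = Real.exp (Real.log (Real.Gamma (x + 1))) :=
          (Real.exp_log (Real.Gamma_pos_of_pos (by linarith))).symm
      _ ≤ Real.exp (Real.log (Real.Gamma (x + t)) + (1 - t) * Real.log (x + t)) :=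
          Real.exp_le_exp.2 h2
      _ = (x + t) ^ (1 - t) * Real.Gamma (x + t) := by
          rw [Real.exp_add, Real.exp_log hGxt, Real.rpow_def_of_pos (by linarith), mul_comm (1-t),
            mul_comm]
  -- AM-GM: (x-1)^t * (x+t)^(1-t) ≤ x
  have amgm : (x - 1) ^ t * (x + t) ^ (1 - t) ≤ x := by
    have := Real.geom_mean_le_arith_mean2_weighted ht0 (by linarith : (0:ℝ) ≤ 1 - t)
      (by linarith : (0:ℝ) ≤ x - 1) (by linarith : (0:ℝ) ≤ x + t) (by ring)
    calc (x - 1) ^ t * (x + t) ^ (1 - t) ≤ t * (x - 1) + (1 - t) * (x + t) := this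
      _ = x - t * t := by ring
      _ ≤ x := by nlinarith
  have hG1' : Real.Gamma (x + 1) = x * Real.Gamma x := Real.Gamma_add_one hx0.ne'
  have hpow : (0:ℝ) < (x + t) ^ (1 - t) := Real.rpow_pos_of_pos (by linarith) _
  have hpow2 : (0:ℝ) ≤ (x - 1) ^ t := Real.rpow_nonneg (by linarith) _
  -- combine
  nlinarith [mul_le_mul_of_nonneg_left key (mul_nonneg hpow2 hGx.le),
    mul_le_mul_of_nonneg_right amgm hGx.le, mul_pos hpow hGxt]

lemma gamma_add_nat (x : ℝ) (hx : 0 < x) (m : ℕ) :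
    Real.Gamma (x + m) = (∏ j ∈ Finset.range m, (x + j)) * Real.Gamma x := by
  induction m with
  | zero => simp
  | succ m ih =>
      rw [Finset.prod_range_succ, Nat.cast_succ, show x + (m + 1) = (x + m) + 1 by ring,
        Real.Gamma_add_one (by positivity), ih]
      ring

lemma prod_ge_pow {N : ℝ} (hN : 0 ≤ N) (m : ℕ) (c : ℝ) (hc : ∀ j : ℕ, j < m → N ≤ c + j) :
    N ^ m ≤ ∏ j ∈ Finset.range m, (c + j) := by
  calc N ^ m = ∏ _j ∈ Finset.range m, N := by rw [Finset.prod_const, Finset.card_range]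
    _ ≤ _ := Finset.prod_le_prod (fun j _ => hN)
        (fun j hj => hc j (Finset.mem_range.1 hj))

lemma prod_le_pow {A : ℝ} (m : ℕ) (c : ℝ) (hc0 : ∀ j : ℕ, j < m → 0 ≤ c + j)
    (hc : ∀ j : ℕ, j < m → c + j ≤ A) :
    ∏ j ∈ Finset.range m, (c + j) ≤ A ^ m := by
  calc ∏ j ∈ Finset.range m, (c + j) ≤ ∏ _j ∈ Finset.range m, A :=
      Finset.prod_le_prod (fun j hj => hc0 j (Finset.mem_range.1 hj))
        (fun j hj => hc j (Finset.mem_range.1 hj))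
    _ = A ^ m := by rw [Finset.prod_const, Finset.card_range]

lemma gamma_ratio_bounds (k : ℕ) {N : ℕ} (hN : 1 ≤ N) :
    (N:ℝ) ^ ((k:ℝ)/2) * Real.Gamma (N+1) ≤ Real.Gamma ((N:ℝ)+1+(k:ℝ)/2) ∧
    Real.Gamma ((N:ℝ)+1+(k:ℝ)/2) ≤ ((N:ℝ)+1+(k:ℝ)/2) ^ ((k:ℝ)/2) * Real.Gamma (N+1) := by
  have hN1 : (1:ℝ) ≤ N := by exact_mod_cast hN
  have hN0 : (0:ℝ) < N := by linarith
  have hG : (0:ℝ) < Real.Gamma ((N:ℝ)+1) := Real.Gamma_pos_of_pos (by linarith)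
  rcases Nat.even_or_odd k with ⟨m, hm⟩ | ⟨m, hm⟩
  · -- k = 2m, s = m
    have hs : (k:ℝ)/2 = (m:ℝ) := by rw [hm]; push_cast; ring
    rw [hs, Real.rpow_natCast, Real.rpow_natCast,
      gamma_add_nat ((N:ℝ)+1) (by linarith) m]
    have hP := prod_ge_pow hN0.le m ((N:ℝ)+1)
      (fun j _ => by have : (0:ℝ) ≤ j := Nat.cast_nonneg j; linarith)
    have hQ := prod_le_pow (A := (N:ℝ)+1+(m:ℝ)) m ((N:ℝ)+1) (fun j _ => by positivity)
      (fun j hj => by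
        have : (j:ℝ) ≤ m := by exact_mod_cast hj.le
        linarith)
    constructor
    · nlinarith
    · nlinarith
  · -- k = 2m+1, s = m + 1/2
    have hs : (k:ℝ)/2 = (m:ℝ) + 1/2 := by rw [hm]; push_cast; ring
    rw [hs]
    have harr : (N:ℝ)+1+((m:ℝ)+1/2) = ((N:ℝ)+1+1/2) + m := by ring
    have hGam : Real.Gamma ((N:ℝ)+1+((m:ℝ)+1/2)) =
        (∏ j ∈ Finset.range m, ((N:ℝ)+1+1/2 + j)) * Real.Gamma ((N:ℝ)+1+1/2) := by
      rw [harr, gamma_add_nat ((N:ℝ)+1+1/2) (by linarith) m]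
    rw [hGam]
    have hup : Real.Gamma ((N:ℝ)+1+1/2) ≤ ((N:ℝ)+1) ^ ((1:ℝ)/2) * Real.Gamma (N+1) :=
      gamma_interp_le (x := (N:ℝ)+1) (t := 1/2) (by linarith) (by norm_num) (by norm_num)
    have hlo : (N:ℝ) ^ ((1:ℝ)/2) * Real.Gamma (N+1) ≤ Real.Gamma ((N:ℝ)+1+1/2) := by
      have := le_gamma_interp (x := (N:ℝ)+1) (t := 1/2) (by linarith) (by norm_num) (by norm_num)
      simpa using this
    have hGh : (0:ℝ) < Real.Gamma ((N:ℝ)+1+1/2) := Real.Gamma_pos_of_pos (by linarith)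
    constructor
    · -- lower
      have h1 : (N:ℝ)^((m:ℝ)+1/2) = (N:ℝ)^(m:ℕ) * (N:ℝ)^((1:ℝ)/2) := by
        rw [← Real.rpow_natCast (N:ℝ) m, ← Real.rpow_add hN0]
      have h2 := prod_ge_pow hN0.le m ((N:ℝ)+1+1/2)
        (fun j _ => by have : (0:ℝ) ≤ j := Nat.cast_nonneg j; linarith)
      have hr : (0:ℝ) ≤ (N:ℝ)^((1:ℝ)/2) := Real.rpow_nonneg hN0.le _
      calc (N:ℝ)^((m:ℝ)+1/2) * Real.Gamma (N+1)
          = (N:ℝ)^(m:ℕ) * ((N:ℝ)^((1:ℝ)/2) * Real.Gamma (N+1)) := by rw [h1]; ring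
        _ ≤ (∏ j ∈ Finset.range m, ((N:ℝ)+1+1/2+j)) * Real.Gamma ((N:ℝ)+1+1/2) := by
            apply mul_le_mul h2 hlo (by positivity) (Finset.prod_nonneg fun j _ => by positivity)
        _ = _ := by ring
    · -- upper
      have hA0 : (0:ℝ) < (N:ℝ)+1+((m:ℝ)+1/2) := by positivity
      have h1 : ((N:ℝ)+1+((m:ℝ)+1/2))^((m:ℝ)+1/2)
          = ((N:ℝ)+1+((m:ℝ)+1/2))^(m:ℕ) * ((N:ℝ)+1+((m:ℝ)+1/2))^((1:ℝ)/2) := by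
        rw [← Real.rpow_natCast ((N:ℝ)+1+((m:ℝ)+1/2)) m, ← Real.rpow_add hA0]
      have h2 := prod_le_pow (A := (N:ℝ)+1+((m:ℝ)+1/2)) m ((N:ℝ)+1+1/2)
        (fun j _ => by positivity)
        (fun j hj => by
          have : (j:ℝ) + 1 ≤ m := by exact_mod_cast hj
          linarith)
      have h3 : ((N:ℝ)+1) ^ ((1:ℝ)/2) ≤ ((N:ℝ)+1+((m:ℝ)+1/2))^((1:ℝ)/2) :=
        Real.rpow_le_rpow (by linarith)
          (by have : (0:ℝ) ≤ m := Nat.cast_nonneg m; linarith) (by norm_num)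
      calc (∏ j ∈ Finset.range m, ((N:ℝ)+1+1/2+j)) * Real.Gamma ((N:ℝ)+1+1/2)
          ≤ ((N:ℝ)+1+((m:ℝ)+1/2))^(m:ℕ) * (((N:ℝ)+1) ^ ((1:ℝ)/2) * Real.Gamma (N+1)) := by
            apply mul_le_mul h2 hup hGh.le (by positivity)
        _ ≤ ((N:ℝ)+1+((m:ℝ)+1/2))^(m:ℕ)
              * (((N:ℝ)+1+((m:ℝ)+1/2)) ^ ((1:ℝ)/2) * Real.Gamma (N+1)) := by
            have h4 : (0:ℝ) ≤ ((N:ℝ)+1+((m:ℝ)+1/2))^(m:ℕ) := by positivity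
            nlinarith [mul_le_mul_of_nonneg_right h3 hG.le]
        _ = ((N:ℝ)+1+((m:ℝ)+1/2))^((m:ℝ)+1/2) * Real.Gamma (N+1) := by rw [h1]; ring

lemma one_sub_rpow_le {a s : ℝ} (ha0 : 0 < a) (hs : 0 ≤ s) :
    1 - a ^ s ≤ s * ((1 - a) / a) := by
  have h1 : 1 + Real.log a * s ≤ a ^ s := by
    rw [Real.rpow_def_of_pos ha0]
    linarith [Real.add_one_le_exp (Real.log a * s)]
  have h2 : Real.log a⁻¹ ≤ a⁻¹ - 1 := Real.log_le_sub_one_of_pos (by positivity)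
  rw [Real.log_inv] at h2
  have h3 : -Real.log a ≤ (1 - a)/a := by
    have ha' : a ≠ 0 := ha0.ne'
    have : a⁻¹ - 1 = (1-a)/a := by field_simp
    linarith
  have h4 : s * (-Real.log a) ≤ s * ((1 - a)/a) := mul_le_mul_of_nonneg_left h3 hs
  have h5 : 1 - a ^ s ≤ s * (-Real.log a) := by nlinarith [h1]
  linarith

lemma ratio_bound {s : ℝ} (hs0 : 0 ≤ s) {N : ℕ} (hN : 1 ≤ N)
    (hlo : (N:ℝ) ^ s * Real.Gamma (N+1) ≤ Real.Gamma ((N:ℝ)+1+s))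
    (hup : Real.Gamma ((N:ℝ)+1+s) ≤ ((N:ℝ)+1+s) ^ s * Real.Gamma (N+1)) :
    |(N:ℝ)^s * Real.Gamma (N+1) / Real.Gamma ((N:ℝ)+1+s) - 1| ≤ s * (1+s) / N := by
  have hN1 : (1:ℝ) ≤ N := by exact_mod_cast hN
  have hN0 : (0:ℝ) < N := by linarith
  have hG : (0:ℝ) < Real.Gamma ((N:ℝ)+1) := Real.Gamma_pos_of_pos (by linarith)
  have hGs : (0:ℝ) < Real.Gamma ((N:ℝ)+1+s) := Real.Gamma_pos_of_pos (by linarith)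
  have hg1 : (N:ℝ)^s * Real.Gamma (N+1) / Real.Gamma ((N:ℝ)+1+s) ≤ 1 := by
    rw [div_le_one hGs]; exact hlo
  have hga : ((N:ℝ)/((N:ℝ)+1+s)) ^ s ≤ (N:ℝ)^s * Real.Gamma (N+1) / Real.Gamma ((N:ℝ)+1+s) := by
    rw [Real.div_rpow hN0.le (by linarith), div_le_div_iff₀ (by positivity) hGs]
    nlinarith [mul_le_mul_of_nonneg_right hup (Real.rpow_nonneg hN0.le s)]
  have ha0 : (0:ℝ) < (N:ℝ)/((N:ℝ)+1+s) := by positivity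
  have key := one_sub_rpow_le ha0 hs0
  have hDne : ((N:ℝ)+1+s) ≠ 0 := by positivity
  have hfrac : (1 - (N:ℝ)/((N:ℝ)+1+s)) / ((N:ℝ)/((N:ℝ)+1+s)) = (1+s)/N := by
    rw [div_eq_div_iff ha0.ne' hN0.ne']
    field_simp
    try ring
    try tauto
  rw [hfrac] at key
  rw [abs_sub_comm, abs_of_nonneg (by linarith)]
  have hr : s * ((1 + s) / (N:ℝ)) = s * (1+s)/(N:ℝ) := by ring
  linarith

lemma radial_integral (m : ℕ) :
    ∫ r in Set.Ioi (0:ℝ), r ^ m * Real.exp (-r ^ 2)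
      = Real.Gamma (((m:ℝ) + 1) / 2) / 2 := by
  have h := integral_rpow_mul_exp_neg_rpow (p := 2) (q := (m:ℝ)) (by norm_num)
    (by linarith [Nat.cast_nonneg (α := ℝ) m])
  rw [show (1:ℝ)/2 * Real.Gamma (((m:ℝ)+1)/2) = Real.Gamma (((m:ℝ)+1)/2) / 2 by ring] at h
  rw [← h]
  refine setIntegral_congr_fun measurableSet_Ioi fun x hx => ?_
  have e1 : x ^ (m:ℝ) = x ^ m := Real.rpow_natCast x m
  have e2 : x ^ (2:ℝ) = x ^ (2:ℕ) := by
    rw [show (2:ℝ) = ((2:ℕ):ℝ) by norm_num, Real.rpow_natCast]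
  rw [e1, e2]

lemma gauss2d (N : ℕ) :
    ∫ z : EuclideanSpace ℝ (Fin 2), ‖z‖ ^ (2*N) * Real.exp (-‖z‖^2)
      = Real.pi * (N.factorial : ℝ) := by
  have key := integral_fun_norm_addHaar (volume : Measure (EuclideanSpace ℝ (Fin 2)))
    (fun r => r ^ (2*N) * Real.exp (-r^2))
  have hdim : Module.finrank ℝ (EuclideanSpace ℝ (Fin 2)) = 2 := finrank_euclideanSpace_fin
  rw [hdim] at key
  rw [key]
  have hball : (volume : Measure (EuclideanSpace ℝ (Fin 2))).real (Metric.ball 0 1)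
      = Real.pi := by
    rw [measureReal_def, EuclideanSpace.volume_ball]
    simp only [Fintype.card_fin]
    rw [show ((2:ℕ):ℝ)/2 + 1 = 2 by norm_num, Real.Gamma_two]
    rw [ENNReal.ofReal_one, one_pow, one_mul, ENNReal.toReal_ofReal (by positivity)]
    rw [Real.sq_sqrt Real.pi_pos.le, div_one]
  rw [hball]
  have hrad : ∫ y in Set.Ioi (0:ℝ), y ^ (2 - 1) • (y ^ (2*N) * Real.exp (-y^2))
      = ((N.factorial : ℝ)) / 2 := by
    have : ∀ y : ℝ, y ^ (2-1) • (y ^ (2*N) * Real.exp (-y^2))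
        = y ^ (2*N+1) * Real.exp (-y^2) := by
      intro y; rw [smul_eq_mul, pow_one]; ring
    simp_rw [this]
    rw [radial_integral (2*N+1)]
    rw [show (((2*N+1 : ℕ):ℝ) + 1)/2 = (N:ℝ) + 1 by push_cast; ring]
    rw [show ((N:ℝ) + 1) = ((N:ℕ):ℝ) + 1 by norm_num, Real.Gamma_nat_eq_factorial]
  rw [hrad]
  simp only [smul_eq_mul, nsmul_eq_mul]
  push_cast
  ring

lemma cdot_smul {n : ℕ} (α : Fin (n + 1) → ℂ) (c : ℝ) (x : EuclideanSpace ℝ (Fin (n + 1))) :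
    cdot α (c • x) = (c : ℂ) * cdot α x := by
  simp only [cdot, Finset.mul_sum]
  refine Finset.sum_congr rfl fun j _ => ?_
  have : (c • x) j = c * x j := rfl
  rw [this]
  push_cast
  ring

lemma cdot_continuous {n : ℕ} (α : Fin (n + 1) → ℂ) :
    Continuous fun x : EuclideanSpace ℝ (Fin (n + 1)) => cdot α x := by
  unfold cdot
  refine continuous_finset_sum _ fun j _ => ?_
  exact (continuous_const.mul
    (Complex.continuous_ofReal.comp ((continuous_apply j).comp
      (PiLp.continuous_ofLp 2 fun _ : Fin (n+1) => ℝ))))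

lemma polar_split (n N : ℕ) (α : Fin (n + 1) → ℂ) :
    ∫ x : EuclideanSpace ℝ (Fin (n + 1)),
        ‖cdot α x‖ ^ (2 * N) * Real.exp (-‖x‖ ^ 2)
    = (∫ ω : Metric.sphere (0 : EuclideanSpace ℝ (Fin (n + 1))) 1,
          ‖cdot α (ω : EuclideanSpace ℝ (Fin (n + 1)))‖ ^ (2 * N)
          ∂((volume : Measure (EuclideanSpace ℝ (Fin (n + 1)))).toSphere))
      * ∫ r in Set.Ioi (0 : ℝ), r ^ n * (r ^ (2 * N) * Real.exp (-r ^ 2)) := by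
  set E := EuclideanSpace ℝ (Fin (n + 1))
  set μ : Measure E := volume with hμ
  have hdim : Module.finrank ℝ E = n + 1 := finrank_euclideanSpace_fin
  set F : E → ℝ := fun x => ‖cdot α x‖ ^ (2 * N) * Real.exp (-‖x‖ ^ 2) with hF
  set G : Metric.sphere (0 : E) 1 × Set.Ioi (0 : ℝ) → ℝ :=
    fun p => ‖cdot α (p.1 : E)‖ ^ (2 * N) * ((p.2 : ℝ) ^ (2 * N) * Real.exp (-(p.2 : ℝ) ^ 2))
    with hG
  have step1 : ∫ x, F x ∂μ = ∫ x : ({0}ᶜ : Set E), F x.1 ∂(μ.comap Subtype.val) := by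
    rw [integral_subtype_comap (measurableSet_singleton _).compl fun x => F x,
      MeasureTheory.restrict_compl_singleton]
  have step2 : ∫ x : ({0}ᶜ : Set E), F x.1 ∂(μ.comap Subtype.val)
      = ∫ p, G p ∂(μ.toSphere.prod (Measure.volumeIoiPow n)) := by
    have key := μ.measurePreserving_homeomorphUnitSphereProd.integral_comp
      (Homeomorph.measurableEmbedding _) G
    rw [hdim, Nat.add_sub_cancel] at key
    rw [← key]
    refine integral_congr_ae (Filter.Eventually.of_forall fun x => ?_)
    have hx0 : (x : E) ≠ 0 := x.2
    have hnx : (0:ℝ) < ‖(x : E)‖ := norm_pos_iff.2 hx0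
    simp only [hG, hF, homeomorphUnitSphereProd_apply_fst_coe,
      homeomorphUnitSphereProd_apply_snd_coe]
    rw [cdot_smul, norm_mul, mul_pow, Complex.norm_real, Real.norm_eq_abs, abs_inv, abs_norm, inv_pow]
    field_simp
  have step3 : ∫ p, G p ∂(μ.toSphere.prod (Measure.volumeIoiPow n))
      = (∫ ω : Metric.sphere (0:E) 1, ‖cdot α (ω:E)‖ ^ (2*N) ∂μ.toSphere)
        * ∫ r : Set.Ioi (0:ℝ), ((r:ℝ) ^ (2*N) * Real.exp (-(r:ℝ)^2))
            ∂(Measure.volumeIoiPow n) :=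
    integral_prod_mul (μ := μ.toSphere) (ν := Measure.volumeIoiPow n)
      (fun ω => ‖cdot α (ω:E)‖ ^ (2*N))
      (fun r => (r:ℝ)^(2*N) * Real.exp (-(r:ℝ)^2))
  have step4 : ∫ r : Set.Ioi (0:ℝ), ((r:ℝ) ^ (2*N) * Real.exp (-(r:ℝ)^2))
        ∂(Measure.volumeIoiPow n)
      = ∫ r in Set.Ioi (0:ℝ), r ^ n * (r ^ (2*N) * Real.exp (-r^2)) := by
    simp only [Measure.volumeIoiPow, ENNReal.ofReal]
    rw [integral_withDensity_eq_integral_smul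
        ((measurable_subtype_coe.pow_const _).real_toNNReal) _,
      integral_subtype_comap measurableSet_Ioi
        (fun a : ℝ => (a ^ n).toNNReal • (a ^ (2*N) * Real.exp (-a^2)))]
    refine setIntegral_congr_fun measurableSet_Ioi fun x hx => ?_
    rw [NNReal.smul_def, Real.coe_toNNReal _ (pow_nonneg (le_of_lt hx) _)]
    simp [smul_eq_mul]
  rw [step1, step2, step3, step4]

lemma gauss_pi {n : ℕ} (N : ℕ) (a b : Fin (n+1)) (hab : a ≠ b) :
    ∫ z : Fin (n+1) → ℝ, ((z a)^2 + (z b)^2) ^ N * ∏ j, Real.exp (-(z j)^2)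
      = (Real.pi * (N.factorial:ℝ)) * Real.sqrt Real.pi ^ ((n+1) - 2) := by
  classical
  set p : Fin (n+1) → Prop := fun j => j = a ∨ j = b with hp
  set e2 : Fin 2 ≃ {j // p j} :=
    { toFun := fun k => if k = 0 then ⟨a, Or.inl rfl⟩ else ⟨b, Or.inr rfl⟩
      invFun := fun i => if i.1 = a then 0 else 1
      left_inv := by
        intro k
        fin_cases k
        · simp
        · simp [hab.symm]
      right_inv := by
        rintro ⟨j, hj | hj⟩
        · subst hj; simp
        · subst hj; simp [hab.symm] } with he2
  have hcard2 : Fintype.card {j // p j} = 2 := by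
    rw [← Fintype.card_fin 2]
    exact (Fintype.card_congr e2.symm)
  have hcardc : Fintype.card {j // ¬ p j} = (n+1) - 2 := by
    rw [Fintype.card_subtype_compl, hcard2, Fintype.card_fin]
  set K : (Fin (n+1) → ℝ) → ℝ :=
    fun z => ((z a)^2 + (z b)^2) ^ N * ∏ j, Real.exp (-(z j)^2) with hK
  set g₁ : ({j // p j} → ℝ) → ℝ := fun y =>
    ((y ⟨a, Or.inl rfl⟩)^2 + (y ⟨b, Or.inr rfl⟩)^2) ^ N
      * ∏ i, Real.exp (-(y i)^2) with hg₁
  set g₂ : ({j // ¬ p j} → ℝ) → ℝ := fun y => ∏ i, Real.exp (-(y i)^2) with hg₂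
  set eqv := MeasurableEquiv.piEquivPiSubtypeProd (fun _ : Fin (n+1) => ℝ) p with heqv
  have mp := (measurePreserving_piEquivPiSubtypeProd
    (fun _ : Fin (n+1) => (volume : Measure ℝ)) p).symm
  have step1 : ∫ z, K z = ∫ w, K (eqv.symm w)
      ∂((Measure.pi fun _ : {j // p j} => volume).prod
        (Measure.pi fun _ : {j // ¬ p j} => volume)) := by
    rw [mp.integral_comp (MeasurableEquiv.measurableEmbedding _) K, ← volume_pi]
  have hsplit : ∀ w, K (eqv.symm w) = g₁ w.1 * g₂ w.2 := by
    intro w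
    have hz : ∀ j, (eqv.symm w) j = if h : p j then w.1 ⟨j, h⟩ else w.2 ⟨j, h⟩ := by
      intro j
      rfl
    have hprod : ∏ j, Real.exp (-((eqv.symm w) j)^2)
        = (∏ i : {j // p j}, Real.exp (-((eqv.symm w) i.1)^2))
          * ∏ i : {j // ¬ p j}, Real.exp (-((eqv.symm w) i.1)^2) :=
      (Fintype.prod_subtype_mul_prod_subtype p
        (fun j => Real.exp (-((eqv.symm w) j)^2))).symm
    rw [hK]
    simp only
    rw [hprod, hz a, hz b, dif_pos (Or.inl rfl), dif_pos (Or.inr rfl)]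
    have h1 : ∀ i : {j // p j}, (eqv.symm w) i.1 = w.1 i := by
      intro i; rw [hz i.1, dif_pos i.2]
    have h2 : ∀ i : {j // ¬ p j}, (eqv.symm w) i.1 = w.2 i := by
      intro i; rw [hz i.1, dif_neg i.2]
    simp_rw [h1, h2]
    rw [hg₁, hg₂]
    ring
  have step2 : ∫ w, K (eqv.symm w)
      ∂((Measure.pi fun _ : {j // p j} => volume).prod
        (Measure.pi fun _ : {j // ¬ p j} => volume))
      = (∫ y, g₁ y ∂(Measure.pi fun _ : {j // p j} => volume))
        * ∫ y, g₂ y ∂(Measure.pi fun _ : {j // ¬ p j} => volume) := by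
    simp_rw [hsplit]
    exact integral_prod_mul g₁ g₂
  have hg2val : ∫ y, g₂ y ∂(Measure.pi fun _ : {j // ¬ p j} => volume)
      = Real.sqrt Real.pi ^ ((n+1) - 2) := by
    simp only [hg₂]
    rw [MeasureTheory.integral_fintype_prod_eq_pow (fun t : ℝ => Real.exp (-t^2)), hcardc]
    congr 1
    have : ∀ t : ℝ, Real.exp (-t^2) = Real.exp (-1*t^2) := by intro t; ring_nf
    simp_rw [this]
    rw [integral_gaussian 1, div_one]
  have hg1val : ∫ y, g₁ y ∂(Measure.pi fun _ : {j // p j} => volume)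
      = Real.pi * (N.factorial:ℝ) := by
    rw [← volume_pi]
    have mpc := volume_measurePreserving_piCongrLeft (fun _ : {j // p j} => ℝ) e2
    rw [← mpc.integral_comp (MeasurableEquiv.measurableEmbedding _) g₁]
    have happ : ∀ (c : Fin 2 → ℝ) (k : Fin 2),
        (MeasurableEquiv.piCongrLeft (fun _ : {j // p j} => ℝ) e2 c) (e2 k) = c k := by
      intro c k
      rw [MeasurableEquiv.coe_piCongrLeft, Equiv.piCongrLeft_apply_apply]
    have hpt : ∀ c : Fin 2 → ℝ,
        g₁ (MeasurableEquiv.piCongrLeft (fun _ : {j // p j} => ℝ) e2 c)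
        = ((c 0)^2 + (c 1)^2) ^ N * (Real.exp (-(c 0)^2) * Real.exp (-(c 1)^2)) := by
      intro c
      have ha' : (⟨a, Or.inl rfl⟩ : {j // p j}) = e2 0 := by
        rw [he2]; simp
      have hb' : (⟨b, Or.inr rfl⟩ : {j // p j}) = e2 1 := by
        rw [he2]; simp
      have hprod : ∏ i : {j // p j},
          Real.exp (-((MeasurableEquiv.piCongrLeft (fun _ : {j // p j} => ℝ) e2 c) i)^2)
          = ∏ k : Fin 2, Real.exp (-(c k)^2) := by
        rw [← Equiv.prod_comp e2]
        exact Finset.prod_congr rfl fun k _ => by rw [happ c k]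
      rw [hg₁]
      simp only
      rw [ha', hb', happ c 0, happ c 1, hprod, Fin.prod_univ_two]
    simp_rw [hpt]
    have mpe := EuclideanSpace.volume_preserving_symm_measurableEquiv_toLp (Fin 2)
    rw [← mpe.integral_comp (MeasurableEquiv.measurableEmbedding _)]
    have hpt2 : ∀ z : EuclideanSpace ℝ (Fin 2),
        ((((MeasurableEquiv.toLp 2 (Fin 2 → ℝ)).symm) z 0)^2
          + (((MeasurableEquiv.toLp 2 (Fin 2 → ℝ)).symm) z 1)^2) ^ N
          * (Real.exp (-(((MeasurableEquiv.toLp 2 (Fin 2 → ℝ)).symm) z 0)^2)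
            * Real.exp (-(((MeasurableEquiv.toLp 2 (Fin 2 → ℝ)).symm) z 1)^2))
        = ‖z‖ ^ (2*N) * Real.exp (-‖z‖^2) := by
      intro z
      have hz : ∀ k, ((MeasurableEquiv.toLp 2 (Fin 2 → ℝ)).symm) z k = z k := fun k => rfl
      have hnorm : ‖z‖^2 = (z 0)^2 + (z 1)^2 := by
        rw [EuclideanSpace.norm_eq, Real.sq_sqrt (Finset.sum_nonneg fun i _ => sq_nonneg _),
          Fin.sum_univ_two]
        simp [Real.norm_eq_abs, sq_abs]
      rw [hz 0, hz 1, ← hnorm, ← Real.exp_add, ← neg_add, ← hnorm, pow_mul]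
    simp_rw [hpt2]
    exact gauss2d N
  rw [step1, step2, hg1val, hg2val]

lemma gauss_total (n N : ℕ) (hn : 1 ≤ n) (α : Fin (n+1) → ℂ) (hα : memA α) :
    ∫ x : EuclideanSpace ℝ (Fin (n+1)),
        ‖cdot α x‖ ^ (2*N) * Real.exp (-‖x‖^2)
      = (Real.pi * (N.factorial:ℝ)) * Real.sqrt Real.pi ^ (n - 1) := by
  classical
  obtain ⟨m, rfl⟩ : ∃ m, n = m + 1 := ⟨n - 1, by omega⟩
  set E := EuclideanSpace ℝ (Fin (m+1+1))
  have h01 : (0 : Fin (m+1+1)) ≠ 1 := Fin.zero_ne_one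
  set u : E := WithLp.toLp 2 (fun j => (α j).re : Fin (m+1+1) → ℝ) with hu
  set v : E := WithLp.toLp 2 (fun j => (α j).im : Fin (m+1+1) → ℝ) with hv
  have huu : inner ℝ u u = 1 := by
    rw [PiLp.inner_apply]
    simp only [RCLike.inner_apply, starRingEnd_apply, star_trivial]
    rw [← hα.1]
    exact Finset.sum_congr rfl fun j _ => by rw [sq]
  have hvv : inner ℝ v v = 1 := by
    rw [PiLp.inner_apply]
    simp only [RCLike.inner_apply, starRingEnd_apply, star_trivial]
    rw [← hα.2.1]
    exact Finset.sum_congr rfl fun j _ => by rw [sq]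
  have huv : inner ℝ u v = 0 := by
    rw [PiLp.inner_apply]
    simp only [RCLike.inner_apply, starRingEnd_apply, star_trivial]
    rw [← hα.2.2]
    exact Finset.sum_congr rfl fun j _ => mul_comm _ _
  have hvu : inner ℝ v u = 0 := by rw [real_inner_comm]; exact huv
  set s : Set (Fin (m+1+1)) := {0, 1} with hs
  set w : Fin (m+1+1) → E := fun i => if i = 0 then u else v with hw
  have hw0 : w 0 = u := by rw [hw]; simp
  have hw1 : w 1 = v := by rw [hw]; simp [h01.symm]
  have hortho : Orthonormal ℝ (s.restrict w) := by
    rw [orthonormal_iff_ite]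
    rintro ⟨i, hi⟩ ⟨j, hj⟩
    have hi' : i = 0 ∨ i = 1 := by simpa [hs] using hi
    have hj' : j = 0 ∨ j = 1 := by simpa [hs] using hj
    rcases hi' with rfl | rfl <;> rcases hj' with rfl | rfl
    · have hu1 := norm_eq_sqrt_real_inner u
      rw [huu, Real.sqrt_one] at hu1
      simp [Set.restrict, hw0, hu1, Subtype.ext_iff]
    · simp [Set.restrict, hw0, hw1, huv, Subtype.ext_iff, h01]
    · simp [Set.restrict, hw0, hw1, hvu, Subtype.ext_iff, h01.symm]
    · have hv1 := norm_eq_sqrt_real_inner v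
      rw [hvv, Real.sqrt_one] at hv1
      simp [Set.restrict, hw1, hv1, Subtype.ext_iff]
  obtain ⟨b, hb⟩ := hortho.exists_orthonormalBasis_extension_of_card_eq
    (by rw [finrank_euclideanSpace])
  have hb0 : b 0 = u := by rw [hb 0 (by simp [hs]), hw0]
  have hb1 : b 1 = v := by rw [hb 1 (by simp [hs]), hw1]
  have hre : ∀ x : E, (cdot α x).re = inner ℝ u x := by
    intro x
    rw [PiLp.inner_apply]
    simp only [RCLike.inner_apply, starRingEnd_apply, star_trivial]
    rw [cdot, Complex.re_sum]
    exact Finset.sum_congr rfl fun j _ => by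
      simp [Complex.mul_re]; exact mul_comm _ _
  have him : ∀ x : E, (cdot α x).im = inner ℝ v x := by
    intro x
    rw [PiLp.inner_apply]
    simp only [RCLike.inner_apply, starRingEnd_apply, star_trivial]
    rw [cdot, Complex.im_sum]
    exact Finset.sum_congr rfl fun j _ => by
      simp [Complex.mul_im]; exact mul_comm _ _
  -- change of variables
  have mp := b.measurePreserving_repr_symm
  rw [← mp.integral_comp (b.repr.symm.toHomeomorph.measurableEmbedding)
    (fun x : E => ‖cdot α x‖ ^ (2*N) * Real.exp (-‖x‖^2))]
  have hpt : ∀ y : EuclideanSpace ℝ (Fin (m+1+1)),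
      ‖cdot α (b.repr.symm y)‖ ^ (2*N) * Real.exp (-‖b.repr.symm y‖^2)
      = ((y 0)^2 + (y 1)^2) ^ N * ∏ j, Real.exp (-(y j)^2) := by
    intro y
    have habs : ‖cdot α (b.repr.symm y)‖ ^ (2*N)
        = ((y 0)^2 + (y 1)^2) ^ N := by
      rw [pow_mul, Complex.sq_norm, Complex.normSq_apply, hre, him]
      have h0 : inner ℝ u (b.repr.symm y) = y 0 := by
        rw [← hb0, ← OrthonormalBasis.repr_apply_apply, LinearIsometryEquiv.apply_symm_apply]
      have h1 : inner ℝ v (b.repr.symm y) = y 1 := by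
        rw [← hb1, ← OrthonormalBasis.repr_apply_apply, LinearIsometryEquiv.apply_symm_apply]
      rw [h0, h1, sq, sq]
    have hnorm : Real.exp (-‖b.repr.symm y‖^2) = ∏ j, Real.exp (-(y j)^2) := by
      rw [LinearIsometryEquiv.norm_map, EuclideanSpace.norm_eq,
        Real.sq_sqrt (Finset.sum_nonneg fun i _ => sq_nonneg _)]
      rw [← Real.exp_sum]
      congr 1
      rw [← Finset.sum_neg_distrib]
      exact Finset.sum_congr rfl fun j _ => by simp [Real.norm_eq_abs, sq_abs]
    rw [habs, hnorm]
  simp_rw [hpt]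
  -- transfer to pi space
  have mpe := EuclideanSpace.volume_preserving_symm_measurableEquiv_toLp (Fin (m+1+1))
  have mpes := MeasurePreserving.symm _ mpe
  rw [← mpes.integral_comp (MeasurableEquiv.measurableEmbedding _)
    (fun y : EuclideanSpace ℝ (Fin (m+1+1)) => ((y 0)^2 + (y 1)^2) ^ N * ∏ j, Real.exp (-(y j)^2))]
  have hpt2 : ∀ z : Fin (m+1+1) → ℝ,
      (((((MeasurableEquiv.toLp 2 (Fin (m+1+1) → ℝ)).symm).symm z) 0)^2
        + ((((MeasurableEquiv.toLp 2 (Fin (m+1+1) → ℝ)).symm).symm z) 1)^2) ^ N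
        * ∏ j, Real.exp (-(((((MeasurableEquiv.toLp 2 (Fin (m+1+1) → ℝ)).symm).symm z)) j)^2)
      = ((z 0)^2 + (z 1)^2) ^ N * ∏ j, Real.exp (-(z j)^2) := by
    intro z
    have hz : ∀ k, (((MeasurableEquiv.toLp 2 (Fin (m+1+1) → ℝ)).symm).symm z) k = z k := fun k => rfl
    simp_rw [hz]
  simp_rw [hpt2]
  rw [gauss_pi N 0 1 h01]
  have he : m + 1 + 1 - 2 = m + 1 - 1 := by omega
  rw [he]

/-- there is `C > 0` with
`|(N/π)^{(n−1)/2} ∫_{𝕊ⁿ} |α·ω|^{2N} dΩ − 2π| ≤ C/N` for all `N ≥ 1`;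
i.e. `a(N)² = (N/π)^{(n−1)/2}[1/(2π) + O(N⁻¹)]`. -/
theorem stmt9 (n : ℕ) (hn : 1 ≤ n) (α : Fin (n + 1) → ℂ) (hα : memA α) :
    ∃ C > 0, ∀ N : ℕ, 1 ≤ N →
      |((N : ℝ) / Real.pi) ^ (((n : ℝ) - 1) / 2) *
          (∫ ω : Metric.sphere (0 : EuclideanSpace ℝ (Fin (n + 1))) 1,
            ‖cdot α (ω : EuclideanSpace ℝ (Fin (n + 1)))‖ ^ (2 * N)
            ∂((volume : Measure (EuclideanSpace ℝ (Fin (n + 1)))).toSphere))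
        - 2 * Real.pi| ≤ C / N := by
  set k := n - 1 with hk
  set s : ℝ := ((n : ℝ) - 1) / 2 with hs
  have hcast : ((k : ℕ) : ℝ) = (n : ℝ) - 1 := by
    rw [hk]
    push_cast [hn]
    ring
  have hsk : s = (k : ℝ) / 2 := by rw [hs, hcast]
  have hs0 : 0 ≤ s := by
    rw [hsk]; positivity
  refine ⟨2 * Real.pi * (s * (1 + s)) + 1, by positivity, fun N hN => ?_⟩
  have hN1 : (1:ℝ) ≤ (N:ℝ) := by exact_mod_cast hN
  have hN0 : (0:ℝ) < N := by linarith
  have hGpos : (0:ℝ) < Real.Gamma ((N:ℝ) + 1 + s) := Real.Gamma_pos_of_pos (by linarith)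
  have hG1pos : (0:ℝ) < Real.Gamma ((N:ℝ) + 1) := Real.Gamma_pos_of_pos (by linarith)
  -- value of the radial integral
  have hR : ∫ r in Set.Ioi (0:ℝ), r ^ n * (r ^ (2*N) * Real.exp (-r ^ 2))
      = Real.Gamma ((N:ℝ) + 1 + s) / 2 := by
    have h1 : ∫ r in Set.Ioi (0:ℝ), r ^ n * (r ^ (2*N) * Real.exp (-r ^ 2))
        = ∫ r in Set.Ioi (0:ℝ), r ^ (2*N+n) * Real.exp (-r ^ 2) := by
      refine setIntegral_congr_fun measurableSet_Ioi fun x _ => ?_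
      rw [pow_add]
      ring
    rw [h1, radial_integral (2*N+n)]
    congr 1
    rw [hs]
    push_cast
    ring
  -- value of sphere integral
  have hsqrtpi : Real.sqrt Real.pi ^ (n - 1) = Real.pi ^ s := by
    rw [Real.sqrt_eq_rpow, ← Real.rpow_natCast (Real.pi ^ ((1:ℝ)/2)) (n-1),
      ← Real.rpow_mul Real.pi_pos.le, hsk, hk]
    congr 1
    ring
  have hfact : (N.factorial : ℝ) = Real.Gamma ((N:ℝ) + 1) :=
    (Real.Gamma_nat_eq_factorial N).symm
  have key := polar_split n N α
  rw [gauss_total n N hn α hα, hR, hsqrtpi, hfact] at key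
  set I := ∫ ω : Metric.sphere (0 : EuclideanSpace ℝ (Fin (n + 1))) 1,
      ‖cdot α (ω : EuclideanSpace ℝ (Fin (n + 1)))‖ ^ (2 * N)
      ∂((volume : Measure (EuclideanSpace ℝ (Fin (n + 1)))).toSphere) with hI
  have hIval : I = 2 * Real.pi * Real.Gamma ((N:ℝ)+1) * Real.pi ^ s
      / Real.Gamma ((N:ℝ) + 1 + s) := by
    field_simp at key ⊢
    linarith [key]
  have hpis : (0:ℝ) < Real.pi ^ s := Real.rpow_pos_of_pos Real.pi_pos _
  have hX : ((N : ℝ) / Real.pi) ^ s * I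
      = 2 * Real.pi * ((N:ℝ)^s * Real.Gamma ((N:ℝ)+1) / Real.Gamma ((N:ℝ)+1+s)) := by
    rw [Real.div_rpow (Nat.cast_nonneg N) Real.pi_pos.le, hIval]
    field_simp
  rw [hX]
  obtain ⟨hlo, hup⟩ := gamma_ratio_bounds k hN
  rw [← hsk] at hlo hup
  have hrb := ratio_bound hs0 hN hlo hup
  set Q := (N:ℝ)^s * Real.Gamma ((N:ℝ)+1) / Real.Gamma ((N:ℝ)+1+s) with hQ
  have h2 : |2 * Real.pi * Q - 2 * Real.pi| = 2 * Real.pi * |Q - 1| := by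
    rw [show 2*Real.pi*Q - 2*Real.pi = 2*Real.pi*(Q-1) by ring, abs_mul,
      abs_of_pos (by positivity : (0:ℝ) < 2*Real.pi)]
  rw [h2]
  calc 2 * Real.pi * |Q - 1| ≤ 2 * Real.pi * (s * (1+s) / N) := by
        have h2pi : (0:ℝ) ≤ 2 * Real.pi := by positivity
        exact mul_le_mul_of_nonneg_left hrb h2pi
    _ = (2 * Real.pi * (s * (1+s))) / N := by ring
    _ ≤ (2 * Real.pi * (s * (1+s)) + 1) / N := by
        exact (div_le_div_iff_of_pos_right hN0).mpr (by linarith)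
end

section
/- Let ρ : ℝ → ℝ be continuous and let B ∈ ℝ. Then ∫₀^{π/2} ( ∫₀^{π} ρ( −(B/2) cos ψ cos θ ) sin θ dθ ) cos ψ sin ψ dψ = ∫_{−1}^{1} ρ( −(B/2) u ) (1 − |u|) du. -/
open intervalIntegral Real

/-- for continuous `ρ` and `B ∈ ℝ`,
`∫₀^{π/2}(∫₀^π ρ(−(B/2)cosψcosθ) sinθ dθ) cosψ sinψ dψ = ∫_{−1}^{1} ρ(−(B/2)u)(1−|u|)du`. -/
theorem stmt14 (ρ : ℝ → ℝ) (hρ : Continuous ρ) (B : ℝ) :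
    (∫ ψ in (0 : ℝ)..(Real.pi / 2),
      (∫ θ in (0 : ℝ)..Real.pi, ρ (-(B / 2) * Real.cos ψ * Real.cos θ) * Real.sin θ) *
        (Real.cos ψ * Real.sin ψ)) =
    ∫ u in (-1 : ℝ)..1, ρ (-(B / 2) * u) * (1 - |u|) := by
  set c : ℝ := -(B / 2) with hc
  set g : ℝ → ℝ := fun u => ρ (c * u) with hg
  have hg_cont : Continuous g := hρ.comp (continuous_const.mul continuous_id)
  set F : ℝ → ℝ := fun x => ∫ s in (0 : ℝ)..x, g s with hF
  have hF_deriv : ∀ x : ℝ, HasDerivAt F (g x) x := fun x =>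
    intervalIntegral.integral_hasDerivAt_right (hg_cont.intervalIntegrable _ _)
      (hg_cont.stronglyMeasurableAtFilter _ _) hg_cont.continuousAt
  have hF_cont : Continuous F :=
    continuous_iff_continuousAt.2 fun x => (hF_deriv x).continuousAt
  have hF0 : F 0 = 0 := intervalIntegral.integral_same
  -- Step 1 : inner integral
  have inner : ∀ ψ : ℝ,
      (∫ θ in (0 : ℝ)..π, ρ (c * Real.cos ψ * Real.cos θ) * Real.sin θ) * Real.cos ψ
        = F (Real.cos ψ) - F (-Real.cos ψ) := by
    intro ψ
    have h := intervalIntegral.integral_comp_smul_deriv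
      (a := (0 : ℝ)) (b := π)
      (f := fun θ => Real.cos ψ * Real.cos θ)
      (f' := fun θ => -(Real.cos ψ * Real.sin θ)) (g := g)
      (fun θ _ => by
        simpa [mul_comm, mul_neg] using (Real.hasDerivAt_cos θ).const_mul (Real.cos ψ))
      ((continuous_const.mul Real.continuous_sin).neg.continuousOn) hg_cont
    simp only [Real.cos_zero, Real.cos_pi, mul_one, mul_neg_one, Function.comp] at h
    have h2 : (∫ θ in (0 : ℝ)..π, ρ (c * Real.cos ψ * Real.cos θ) * Real.sin θ) * Real.cos ψ
        = -∫ θ in (0 : ℝ)..π, (-(Real.cos ψ * Real.sin θ)) • g (Real.cos ψ * Real.cos θ) := by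
      rw [← intervalIntegral.integral_mul_const, ← intervalIntegral.integral_neg]
      apply intervalIntegral.integral_congr
      intro θ _
      simp [hg, smul_eq_mul, mul_assoc]
      ring
    rw [h2, h, ← intervalIntegral.integral_symm]
    have := intervalIntegral.integral_interval_sub_left
      (μ := MeasureTheory.volume) (a := (0 : ℝ)) (b := Real.cos ψ) (c := -Real.cos ψ) (f := g)
      (hg_cont.intervalIntegrable _ _) (hg_cont.intervalIntegrable _ _)
    simpa [hF] using this.symm
  -- Step 2 : outer integral
  have step2 : (∫ ψ in (0 : ℝ)..(π / 2),
      (∫ θ in (0 : ℝ)..π, ρ (c * Real.cos ψ * Real.cos θ) * Real.sin θ) *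
        (Real.cos ψ * Real.sin ψ))
      = ∫ t in (0 : ℝ)..1, (F t - F (-t)) := by
    have hH : Continuous fun t => F t - F (-t) :=
      hF_cont.sub (hF_cont.comp continuous_neg)
    have h := intervalIntegral.integral_comp_smul_deriv
      (a := (0 : ℝ)) (b := π / 2)
      (f := fun ψ => Real.cos ψ) (f' := fun ψ => -Real.sin ψ)
      (g := fun t => F t - F (-t))
      (fun ψ _ => Real.hasDerivAt_cos ψ)
      (Real.continuous_sin.neg.continuousOn) hH
    simp only [Real.cos_zero, Real.cos_pi_div_two, Function.comp] at h
    have h2 : (∫ ψ in (0 : ℝ)..(π / 2),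
        (∫ θ in (0 : ℝ)..π, ρ (c * Real.cos ψ * Real.cos θ) * Real.sin θ) *
          (Real.cos ψ * Real.sin ψ))
        = -∫ ψ in (0 : ℝ)..(π / 2),
            (-Real.sin ψ) • (F (Real.cos ψ) - F (-Real.cos ψ)) := by
      rw [← intervalIntegral.integral_neg]
      apply intervalIntegral.integral_congr
      intro ψ _
      have := inner ψ
      simp only [smul_eq_mul, neg_mul, neg_neg]
      rw [← this]; ring
    rw [h2, h, ← intervalIntegral.integral_symm]
  -- Step 3 : the right-hand side
  have ibp1 : (∫ u in (0 : ℝ)..1, g u * (1 - u)) = ∫ t in (0 : ℝ)..1, F t := by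
    have h := intervalIntegral.integral_mul_deriv_eq_deriv_mul
      (a := (0 : ℝ)) (b := 1)
      (u := fun x => 1 - x) (u' := fun _ => (-1 : ℝ)) (v := F) (v' := g)
      (fun x _ => by simpa using (hasDerivAt_id x).const_sub (1 : ℝ))
      (fun x _ => hF_deriv x)
      (intervalIntegrable_const) (hg_cont.intervalIntegrable _ _)
    have h' : (∫ u in (0 : ℝ)..1, g u * (1 - u)) = ∫ x in (0 : ℝ)..1, (1 - x) * g x := by
      apply intervalIntegral.integral_congr; intro x _; ring
    rw [h', h, hF0]
    simp [intervalIntegral.integral_neg]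
  have ibp2 : (∫ u in (-1 : ℝ)..0, g u * (1 + u)) = -∫ t in (-1 : ℝ)..0, F t := by
    have h := intervalIntegral.integral_mul_deriv_eq_deriv_mul
      (a := (-1 : ℝ)) (b := 0)
      (u := fun x => 1 + x) (u' := fun _ => (1 : ℝ)) (v := F) (v' := g)
      (fun x _ => by simpa using (hasDerivAt_id x).const_add (1 : ℝ))
      (fun x _ => hF_deriv x)
      (intervalIntegrable_const) (hg_cont.intervalIntegrable _ _)
    have h' : (∫ u in (-1 : ℝ)..0, g u * (1 + u)) = ∫ x in (-1 : ℝ)..0, (1 + x) * g x := by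
      apply intervalIntegral.integral_congr; intro x _; ring
    rw [h', h, hF0]
    simp
  have hcont_rhs : Continuous fun u : ℝ => g u * (1 - |u|) :=
    hg_cont.mul (continuous_const.sub continuous_abs)
  have split : (∫ u in (-1 : ℝ)..1, g u * (1 - |u|))
      = (∫ u in (-1 : ℝ)..0, g u * (1 - |u|)) + ∫ u in (0 : ℝ)..1, g u * (1 - |u|) :=
    (intervalIntegral.integral_add_adjacent_intervals
      (hcont_rhs.intervalIntegrable _ _) (hcont_rhs.intervalIntegrable _ _)).symm
  have abs1 : (∫ u in (0 : ℝ)..1, g u * (1 - |u|)) = ∫ u in (0 : ℝ)..1, g u * (1 - u) := by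
    apply intervalIntegral.integral_congr
    intro u hu
    rw [Set.uIcc_of_le (by norm_num : (0:ℝ) ≤ 1)] at hu
    simp [abs_of_nonneg hu.1]
  have abs2 : (∫ u in (-1 : ℝ)..0, g u * (1 - |u|)) = ∫ u in (-1 : ℝ)..0, g u * (1 + u) := by
    apply intervalIntegral.integral_congr
    intro u hu
    rw [Set.uIcc_of_le (by norm_num : (-1:ℝ) ≤ 0)] at hu
    simp only [abs_of_nonpos hu.2]; ring
  have negflip : (∫ t in (0 : ℝ)..1, F (-t)) = ∫ t in (-1 : ℝ)..0, F t := by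
    simpa using intervalIntegral.integral_comp_neg (a := (0:ℝ)) (b := 1) (f := F)
  have final : (∫ t in (0 : ℝ)..1, (F t - F (-t)))
      = (∫ t in (0 : ℝ)..1, F t) - ∫ t in (-1 : ℝ)..0, F t := by
    rw [← negflip]
    exact intervalIntegral.integral_sub (hF_cont.intervalIntegrable _ _)
      ((hF_cont.comp continuous_neg).intervalIntegrable _ _)
  calc (∫ ψ in (0 : ℝ)..(π / 2),
      (∫ θ in (0 : ℝ)..π, ρ (c * Real.cos ψ * Real.cos θ) * Real.sin θ) *
        (Real.cos ψ * Real.sin ψ))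
      = ∫ t in (0 : ℝ)..1, (F t - F (-t)) := step2
    _ = (∫ t in (0 : ℝ)..1, F t) - ∫ t in (-1 : ℝ)..0, F t := final
    _ = (∫ u in (-1 : ℝ)..0, g u * (1 - |u|)) + ∫ u in (0 : ℝ)..1, g u * (1 - |u|) := by
        rw [abs1, abs2, ibp1, ibp2]; ring
    _ = ∫ u in (-1 : ℝ)..1, g u * (1 - |u|) := split.symm
end
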